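/- Let n ≥ 1 and let S be a real 2n×2n symplectic matrix with det(S − I) ≠ 0. Then S⁻¹ is symplectic with det(S⁻¹ − I) ≠ 0, and the symplectic Cayley transform satisfies the inversion rule M_{S⁻¹} = −M_S. -/

import Mathlib

open Matrix

/-- If `S` is symplectic with `det(S − I) ≠ 0`, then `S⁻¹` is symplectic
with `det(S⁻¹ − I) ≠ 0`, and the symplectic Cayley transform satisfies
`M_{S⁻¹} = −M_S`. -/
theorem symplectic_cayley_transform_inv
    (n : ℕ) (hn : 1 ≤ n)
    (S : Matrix (Fin n ⊕ Fin n) (Fin n ⊕ Fin n) ℝ)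
    (hS : S * (Matrix.fromBlocks 0 1 (-1) 0) * Sᵀ = Matrix.fromBlocks 0 1 (-1) 0)
    (hdet : (S - 1).det ≠ 0) :
    S⁻¹ * (Matrix.fromBlocks 0 1 (-1) 0) * (S⁻¹)ᵀ = Matrix.fromBlocks 0 1 (-1) 0 ∧
    (S⁻¹ - 1).det ≠ 0 ∧
    (1 / 2 : ℝ) • ((Matrix.fromBlocks 0 1 (-1) 0) * (S⁻¹ + 1) * (S⁻¹ - 1)⁻¹) =
      -((1 / 2 : ℝ) • ((Matrix.fromBlocks 0 1 (-1) 0) * (S + 1) * (S - 1)⁻¹)) := by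
  set J : Matrix (Fin n ⊕ Fin n) (Fin n ⊕ Fin n) ℝ := Matrix.fromBlocks 0 1 (-1) 0 with hJ
  -- J = - Matrix.J, so its det is a unit
  have hJeq : J = -(Matrix.J (Fin n) ℝ) := by
    simp only [hJ, Matrix.J, Matrix.fromBlocks_neg, neg_neg, neg_zero]
  have hcard : Fintype.card (Fin n ⊕ Fin n) = 2 * n := by
    simp [Fintype.card_sum, two_mul]
  have hJdet : IsUnit J.det := by
    rw [hJeq, Matrix.det_neg, hcard]
    simpa [pow_mul] using Matrix.isUnit_det_J (Fin n) ℝ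
  -- det S is a unit
  have hSdet : IsUnit S.det := by
    have h := congrArg Matrix.det hS
    simp only [Matrix.det_mul, Matrix.det_transpose] at h
    have h2 : S.det * S.det = 1 :=
      mul_right_cancel₀ hJdet.ne_zero (by linear_combination h)
    exact IsUnit.of_mul_eq_one _ h2
  have hSm1 : IsUnit (S - 1).det := (Ne.isUnit hdet)
  have hSinvS : S⁻¹ * S = 1 := Matrix.nonsing_inv_mul S hSdet
  have hSSinv : S * S⁻¹ = 1 := Matrix.mul_nonsing_inv S hSdet
  -- part 1
  have part1 : S⁻¹ * J * (S⁻¹)ᵀ = J := by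
    have hT : Sᵀ * (S⁻¹)ᵀ = 1 := by
      rw [← Matrix.transpose_mul, hSinvS, Matrix.transpose_one]
    calc S⁻¹ * J * (S⁻¹)ᵀ = S⁻¹ * (S * J * Sᵀ) * (S⁻¹)ᵀ := by rw [hS]
      _ = (S⁻¹ * S) * J * (Sᵀ * (S⁻¹)ᵀ) := by
          simp only [Matrix.mul_assoc]
      _ = J := by rw [hSinvS, hT, Matrix.one_mul, Matrix.mul_one]
  -- S⁻¹ - 1 = -(S⁻¹ * (S - 1))
  have hkey : S⁻¹ - 1 = -(S⁻¹ * (S - 1)) := by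
    rw [Matrix.mul_sub, hSinvS, Matrix.mul_one, neg_sub]
  have part2 : (S⁻¹ - 1).det ≠ 0 := by
    have hinv : S⁻¹.det ≠ 0 := by
      have := Matrix.det_nonsing_inv_mul_det S hSdet
      intro h0; rw [h0, zero_mul] at this; exact zero_ne_one this
    rw [hkey, Matrix.det_neg, Matrix.det_mul, hcard, pow_mul, neg_one_sq, one_pow, one_mul]
    exact mul_ne_zero hinv hdet
  refine ⟨part1, part2, ?_⟩
  -- commute of S with (S-1)⁻¹
  have hcomm : S * (S - 1)⁻¹ = (S - 1)⁻¹ * S := by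
    calc S * (S - 1)⁻¹ = ((S - 1)⁻¹ * (S - 1)) * S * (S - 1)⁻¹ := by
          rw [Matrix.nonsing_inv_mul _ hSm1, Matrix.one_mul]
      _ = (S - 1)⁻¹ * (S * (S - 1) * (S - 1)⁻¹) := by
          have : (S - 1) * S = S * (S - 1) := by noncomm_ring
          simp only [Matrix.mul_assoc, this]
      _ = (S - 1)⁻¹ * S := by
          rw [Matrix.mul_assoc S, Matrix.mul_nonsing_inv _ hSm1, Matrix.mul_one]
  -- inverse of S⁻¹ - 1
  have hneg_inv : (S⁻¹ - 1)⁻¹ = -((S - 1)⁻¹ * S) := by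
    apply Matrix.inv_eq_right_inv
    rw [hkey, Matrix.neg_mul, Matrix.mul_neg, neg_neg]
    calc S⁻¹ * (S - 1) * ((S - 1)⁻¹ * S)
        = S⁻¹ * ((S - 1) * (S - 1)⁻¹) * S := by simp only [Matrix.mul_assoc]
      _ = 1 := by rw [Matrix.mul_nonsing_inv _ hSm1, Matrix.mul_one, hSinvS]
  have main : (S⁻¹ + 1) * (S⁻¹ - 1)⁻¹ = -((S + 1) * (S - 1)⁻¹) := by
    rw [hneg_inv, Matrix.mul_neg, ← hcomm]
    congr 1
    calc (S⁻¹ + 1) * (S * (S - 1)⁻¹) = ((S⁻¹ + 1) * S) * (S - 1)⁻¹ := by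
          rw [Matrix.mul_assoc]
      _ = (S + 1) * (S - 1)⁻¹ := by
          rw [Matrix.add_mul, hSinvS, Matrix.one_mul, add_comm]
  rw [Matrix.mul_assoc, main, Matrix.mul_assoc, Matrix.mul_neg, smul_neg]
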